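/- Let S be an isometry on a complex Hilbert space H. Then the following are equivalent: (1) S is a pure isometry on H; (2) H^iso = H; (3) H^uni = {0}; (4) {0} is the only closed S-reducing subspace of H on which S is unitary. -/

import Mathlib

open ContinuousLinearMap
open scoped InnerProductSpace

variable {H : Type*} [NormedAddCommGroup H] [InnerProductSpace ℂ H] [CompleteSpace H]

/-- The purely isometric part `H^iso`: the closed linear span of the subspaces
`S^k (ker S*)`, `k ≥ 0`. -/
noncomputable def Hiso (S : H →L[ℂ] H) : Submodule ℂ H :=
  (⨆ k : ℕ, Submodule.map (S ^ k).toLinearMap (LinearMap.ker (adjoint S).toLinearMap)).topologicalClosure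

/-- The unitary part `H^uni := ⋂_{k≥0} S^k (H)`. -/
noncomputable def Huni (S : H →L[ℂ] H) : Submodule ℂ H :=
  ⨅ k : ℕ, LinearMap.range (S ^ k).toLinearMap

/-- A closed subspace `L` reduces `S` if it is invariant under `S` and `S*`. -/
def Reduces (S : H →L[ℂ] H) (L : Submodule ℂ H) : Prop :=
  (∀ x ∈ L, S x ∈ L) ∧ ∀ x ∈ L, adjoint S x ∈ L

/-- `S` is unitary on `L`: `S` maps `L` onto `L`. -/
def UnitaryOn (S : H →L[ℂ] H) (L : Submodule ℂ H) : Prop :=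
  Submodule.map S.toLinearMap L = L

/-- `S` is a pure isometry on the `S`-invariant subspace `L`: `{0}` is the only
`S`-invariant closed subspace of `L` on which `S` is unitary. -/
def PureOn (S : H →L[ℂ] H) (L : Submodule ℂ H) : Prop :=
  ∀ M : Submodule ℂ H, IsClosed (M : Set H) → M ≤ L → Submodule.map S.toLinearMap M = M → M = ⊥

/-- `P` is the orthogonal projection of `H` onto the subspace `K`. -/
def IsOrthoProj (P : H →L[ℂ] H) (K : Submodule ℂ H) : Prop :=
  ∀ x, P x ∈ K ∧ x - P x ∈ Kᗮ

theorem statement4 (S : H →L[ℂ] H) (hS : adjoint S * S = 1) :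
    [PureOn S ⊤, Hiso S = ⊤, Huni S = ⊥,
      ∀ L : Submodule ℂ H, IsClosed (L : Set H) → Reduces S L → UnitaryOn S L → L = ⊥].TFAE := by
  have hSx : ∀ x : H, adjoint S (S x) = x := fun x => by
    have := congrArg (fun T : H →L[ℂ] H => T x) hS
    simpa using this
  have hinner : ∀ x y : H, ⟪S x, S y⟫_ℂ = ⟪x, y⟫_ℂ := fun x y => by
    rw [← adjoint_inner_left, hSx]
  have hpinner : ∀ (k : ℕ) (x y : H), ⟪(S ^ k) x, (S ^ k) y⟫_ℂ = ⟪x, y⟫_ℂ := by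
    intro k
    induction k with
    | zero => intro x y; simp
    | succ n ih =>
      intro x y
      have h1 : ∀ z : H, (S ^ (n + 1)) z = (S ^ n) (S z) := fun z => by
        rw [pow_succ]; rfl
      rw [h1, h1, ih, hinner]
  have hpnorm : ∀ (k : ℕ) (x : H), ‖(S ^ k) x‖ = ‖x‖ := fun k x => by
    have h := hpinner k x x
    rw [inner_self_eq_norm_sq_to_K, inner_self_eq_norm_sq_to_K] at h
    have h2 : ‖(S ^ k) x‖ ^ 2 = ‖x‖ ^ 2 := by exact_mod_cast h
    nlinarith [norm_nonneg ((S ^ k) x), norm_nonneg x]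
  have hcomm : ∀ (k : ℕ) (z : H), (S ^ k) (S z) = S ((S ^ k) z) := fun k z => by
    rw [← ContinuousLinearMap.mul_apply, ← pow_succ, pow_succ', ContinuousLinearMap.mul_apply]
  have hpiso : ∀ k : ℕ, Isometry (S ^ k) :=
    fun k => AddMonoidHomClass.isometry_of_norm (S ^ k) (hpnorm k)
  have hrange_closed : ∀ k : ℕ, IsClosed ((LinearMap.range (S ^ k).toLinearMap : Submodule ℂ H) : Set H) := by
    intro k
    have := (hpiso k).isClosedEmbedding.isClosed_range
    convert this using 1
    rw [LinearMap.coe_range, ContinuousLinearMap.coe_coe]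
  -- ker S* = (range S)ᗮ
  have hker : LinearMap.ker (adjoint S).toLinearMap = (LinearMap.range S.toLinearMap)ᗮ := by
    ext x
    simp only [LinearMap.mem_ker, Submodule.mem_orthogonal]
    constructor
    · rintro h u ⟨y, rfl⟩
      rw [ContinuousLinearMap.coe_coe, ← adjoint_inner_right]
      simp [show adjoint S x = 0 from h]
    · intro h
      rw [← @inner_self_eq_zero ℂ, ContinuousLinearMap.coe_coe, adjoint_inner_right]
      exact h _ ⟨adjoint S x, rfl⟩
  have hCS : CompleteSpace (LinearMap.range S.toLinearMap : Submodule ℂ H) := by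
    have h1 : IsClosed ((LinearMap.range S.toLinearMap : Submodule ℂ H) : Set H) := by
      have := hrange_closed 1
      simpa [pow_one] using this
    exact h1.completeSpace_coe
  have hkerorth : (LinearMap.ker (adjoint S).toLinearMap)ᗮ = LinearMap.range S.toLinearMap := by
    rw [hker]
    exact Submodule.orthogonal_orthogonal _
  -- map of powers
  have hmap_succ : ∀ (M : Submodule ℂ H) (k : ℕ),
      Submodule.map (S ^ (k + 1) : H →L[ℂ] H).toLinearMap M
        = Submodule.map (S ^ k : H →L[ℂ] H).toLinearMap (Submodule.map S.toLinearMap M) := by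
    intro M k
    have : (S ^ (k + 1) : H →L[ℂ] H) = (S ^ k) * S := by rw [pow_succ]
    rw [this]
    ext x
    simp only [Submodule.mem_map]
    constructor
    · rintro ⟨y, hy, rfl⟩
      exact ⟨S y, ⟨y, hy, rfl⟩, rfl⟩
    · rintro ⟨z, ⟨y, hy, rfl⟩, rfl⟩
      exact ⟨y, hy, rfl⟩
  tfae_have 1 → 4 := by
    intro h1 L hL _ hun
    exact h1 L hL le_top hun
  tfae_have 4 → 3 := by
    intro h4
    have hmemS : ∀ x ∈ Huni S, S x ∈ Huni S := by
      intro x hx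
      rw [Huni, Submodule.mem_iInf] at hx ⊢
      intro k
      obtain ⟨y, rfl⟩ := hx k
      exact ⟨S y, hcomm k y⟩
    have hmemA : ∀ x ∈ Huni S, adjoint S x ∈ Huni S := by
      intro x hx
      rw [Huni, Submodule.mem_iInf] at hx ⊢
      intro k
      obtain ⟨y, hy⟩ := hx (k + 1)
      refine ⟨y, ?_⟩
      have : x = S ((S ^ k) y) := by
        rw [← hy, pow_succ']; rfl
      rw [this, hSx]; rfl
    apply h4 (Huni S)
    · have : ((Huni S : Submodule ℂ H) : Set H) = ⋂ k, ((LinearMap.range (S ^ k).toLinearMap : Submodule ℂ H) : Set H) := by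
        rw [Huni]
        simp [Submodule.coe_iInf]
      rw [this]
      exact isClosed_iInter fun k => hrange_closed k
    · exact ⟨hmemS, hmemA⟩
    · -- UnitaryOn
      apply le_antisymm
      · rintro x ⟨y, hy, rfl⟩
        exact hmemS y hy
      · intro x hx
        refine ⟨adjoint S x, hmemA x hx, ?_⟩
        rw [Huni, Submodule.mem_iInf] at hx
        obtain ⟨y, hy⟩ := hx 1
        rw [pow_one] at hy
        rw [← hy, ContinuousLinearMap.coe_coe, hSx]
  tfae_have 3 → 2 := by
    intro h3
    rw [Hiso, Submodule.topologicalClosure_eq_top_iff, ← Submodule.iInf_orthogonal]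
    rw [Submodule.eq_bot_iff]
    intro x hx
    rw [Submodule.mem_iInf] at hx
    have hx' : ∀ k : ℕ, x ∈ LinearMap.range (S ^ k).toLinearMap := by
      intro k
      induction k with
      | zero => exact ⟨x, by simp⟩
      | succ n ih =>
        obtain ⟨y, rfl⟩ := ih
        have hy : y ∈ (LinearMap.ker (adjoint S).toLinearMap)ᗮ := by
          rw [Submodule.mem_orthogonal]
          intro u hu
          have := hx n
          rw [Submodule.mem_orthogonal] at this
          have h0 := this ((S ^ n) u) ⟨u, hu, rfl⟩
          rwa [ContinuousLinearMap.coe_coe, hpinner n] at h0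
        rw [hkerorth] at hy
        obtain ⟨w, rfl⟩ := hy
        exact ⟨w, by rw [pow_succ]; rfl⟩
    have : x ∈ Huni S := by
      rw [Huni, Submodule.mem_iInf]; exact hx'
    rw [h3] at this
    exact this
  tfae_have 2 → 1 := by
    intro h2 M _ _ hmap
    have hMk : ∀ k : ℕ, Submodule.map (S ^ k : H →L[ℂ] H).toLinearMap M = M := by
      intro k
      induction k with
      | zero => ext x; simp
      | succ n ih => rw [hmap_succ, hmap, ih]
    rw [Submodule.eq_bot_iff]
    intro x hxM
    have hxorth : x ∈ (⨆ k : ℕ, Submodule.map (S ^ k : H →L[ℂ] H).toLinearMap (LinearMap.ker (adjoint S).toLinearMap))ᗮ := by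
      rw [← Submodule.iInf_orthogonal, Submodule.mem_iInf]
      intro k
      rw [Submodule.mem_orthogonal]
      rintro u ⟨z, hz, rfl⟩
      have : x ∈ Submodule.map (S ^ (k + 1) : H →L[ℂ] H).toLinearMap M := by rw [hMk]; exact hxM
      obtain ⟨y, _, rfl⟩ := this
      have h1 : (S ^ (k + 1)) y = (S ^ k) (S y) := by rw [pow_succ]; rfl
      simp only [ContinuousLinearMap.coe_coe]
      rw [h1, hpinner k, ← adjoint_inner_left]
      have hz' : adjoint S z = 0 := hz
      simp [hz']
    have hcl : (Hiso S)ᗮ = (⨆ k : ℕ, Submodule.map (S ^ k : H →L[ℂ] H).toLinearMap (LinearMap.ker (adjoint S).toLinearMap))ᗮ := by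
      rw [Hiso, ← Submodule.orthogonal_orthogonal_eq_closure, Submodule.triorthogonal_eq_orthogonal]
    rw [← hcl, h2, Submodule.top_orthogonal_eq_bot] at hxorth
    exact hxorth
  tfae_finish
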